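/- Let n ≥ 1 be a natural number, and let A and B be 2 × 2ⁿ matrices over ℤ. Suppose that for every n-tuple (y₁, …, yₙ) of column vectors, each yⱼ taken from the three vectors e₁ = (1,0)ᵀ, e₂ = (0,1)ᵀ, x = (1,1)ᵀ in ℤ², the matrix–vector products satisfy A·ξⁿ(y₁, …, yₙ) = B·ξⁿ(y₁, …, yₙ) or A·ξⁿ(y₁, …, yₙ) = −B·ξⁿ(y₁, …, yₙ). Then A = B or A = −B. -/

import Mathlib

open Matrix

def xi (n : ℕ) (y : Fin n → Fin 2 → ℤ) : (Fin n → Fin 2) → ℤ :=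
  fun d => ∏ j, y j (d j)

private def res {n : ℕ} (M : Matrix (Fin 2) (Fin (n+1) → Fin 2) ℤ) (k : Fin 2) :
    Matrix (Fin 2) (Fin n → Fin 2) ℤ := fun i d => M i (Fin.cons k d)

private lemma xi_cons {n : ℕ} (v : Fin 2 → ℤ) (y : Fin n → Fin 2 → ℤ)
    (k : Fin 2) (d : Fin n → Fin 2) :
    xi (n+1) (Fin.cons v y) (Fin.cons k d) = v k * xi n y d := by
  simp [xi, Fin.prod_univ_succ]

private lemma mulVec_xi_cons {n : ℕ} (M : Matrix (Fin 2) (Fin (n+1) → Fin 2) ℤ)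
    (v : Fin 2 → ℤ) (y : Fin n → Fin 2 → ℤ) :
    M.mulVec (xi (n+1) (Fin.cons v y)) =
      v 0 • (res M 0).mulVec (xi n y) + v 1 • (res M 1).mulVec (xi n y) := by
  funext i
  simp only [mulVec, dotProduct, Pi.add_apply, Pi.smul_apply, smul_eq_mul]
  rw [← Equiv.sum_comp (Fin.consEquiv (fun _ => Fin 2))]
  rw [Fintype.sum_prod_type]
  rw [Fin.sum_univ_two]
  rw [Finset.mul_sum, Finset.mul_sum]
  congr 1 <;> apply Finset.sum_congr rfl <;> intro d _ <;>
    simp [Fin.consEquiv, xi_cons, res] <;> ring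

private lemma key {M : Type*} [AddCommGroup M] (htf : ∀ x : M, x + x = 0 → x = 0)
    (a0 a1 b0 b1 : M)
    (h0 : a0 = b0 ∨ a0 = -b0) (h1 : a1 = b1 ∨ a1 = -b1)
    (hs : a0 + a1 = b0 + b1 ∨ a0 + a1 = -(b0 + b1)) :
    (a0 = b0 ∧ a1 = b1) ∨ (a0 = -b0 ∧ a1 = -b1) := by
  rcases h0 with h0 | h0 <;> rcases h1 with h1 | h1
  · exact Or.inl ⟨h0, h1⟩
  · rw [h0, h1] at hs
    rcases hs with hs | hs
    · have e : -b1 = b1 := add_left_cancel hs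
      have hb : b1 = 0 := htf b1 (by nth_rewrite 1 [← e]; abel)
      left; exact ⟨h0, by rw [h1, hb]; simp⟩
    · have e2 : b0 + -b1 = -b0 + -b1 := by rw [hs]; abel
      have e : b0 = -b0 := add_right_cancel e2
      have hb : b0 = 0 := htf b0 (by nth_rewrite 2 [e]; abel)
      right; exact ⟨by rw [h0, hb]; simp, h1⟩
  · rw [h0, h1] at hs
    rcases hs with hs | hs
    · have e : -b0 = b0 := add_right_cancel hs
      have hb : b0 = 0 := htf b0 (by nth_rewrite 1 [← e]; abel)
      left; exact ⟨by rw [h0, hb]; simp, h1⟩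
    · have e2 : -b0 + b1 = -b0 + -b1 := by rw [hs]; abel
      have e : b1 = -b1 := add_left_cancel e2
      have hb : b1 = 0 := htf b1 (by nth_rewrite 2 [e]; abel)
      right; exact ⟨h0, by rw [h1, hb]; simp⟩
  · exact Or.inr ⟨h0, h1⟩

private lemma aux (n : ℕ) (A B : Matrix (Fin 2) (Fin n → Fin 2) ℤ)
    (h : ∀ y : Fin n → Fin 2 → ℤ,
      (∀ j, y j = ![1, 0] ∨ y j = ![0, 1] ∨ y j = ![1, 1]) →
      A.mulVec (xi n y) = B.mulVec (xi n y) ∨ A.mulVec (xi n y) = -(B.mulVec (xi n y))) :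
    A = B ∨ A = -B := by
  induction n with
  | zero =>
    have h0 := h (fun _ => ![1, 0]) (fun j => j.elim0)
    have hx : xi 0 (fun _ => ![1, 0]) = fun _ => 1 := by
      funext d; simp [xi]
    rw [hx] at h0
    rcases h0 with h0 | h0 <;> [left; right] <;> ext i d <;>
      have hthis := congrFun h0 i <;>
      simp only [mulVec, dotProduct, mul_one, Pi.neg_apply] at hthis <;>
      rw [Fintype.sum_subsingleton _ d, Fintype.sum_subsingleton _ d] at hthis <;>
      simpa using hthis
  | succ n ih =>
    -- helper to build hypotheses for the induction
    have hyp0 : ∀ y : Fin n → Fin 2 → ℤ,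
        (∀ j, y j = ![1, 0] ∨ y j = ![0, 1] ∨ y j = ![1, 1]) →
        ∀ v : Fin 2 → ℤ, (v = ![1, 0] ∨ v = ![0, 1] ∨ v = ![1, 1]) →
        A.mulVec (xi (n+1) (Fin.cons v y)) = B.mulVec (xi (n+1) (Fin.cons v y)) ∨
        A.mulVec (xi (n+1) (Fin.cons v y)) = -(B.mulVec (xi (n+1) (Fin.cons v y))) := by
      intro y hy v hv
      apply h
      intro j
      induction j using Fin.cases with
      | zero => simpa using hv
      | succ j => simpa using hy j
    have h0 : res A 0 = res B 0 ∨ res A 0 = -(res B 0) := by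
      apply ih
      intro y hy
      have := hyp0 y hy ![1,0] (Or.inl rfl)
      rw [mulVec_xi_cons, mulVec_xi_cons] at this
      simpa using this
    have h1 : res A 1 = res B 1 ∨ res A 1 = -(res B 1) := by
      apply ih
      intro y hy
      have := hyp0 y hy ![0,1] (Or.inr (Or.inl rfl))
      rw [mulVec_xi_cons, mulVec_xi_cons] at this
      simpa using this
    have hsum : res A 0 + res A 1 = res B 0 + res B 1 ∨
        res A 0 + res A 1 = -(res B 0 + res B 1) := by
      have := ih (res A 0 + res A 1) (res B 0 + res B 1) ?_
      · exact this
      intro y hy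
      have := hyp0 y hy ![1,1] (Or.inr (Or.inr rfl))
      rw [mulVec_xi_cons, mulVec_xi_cons] at this
      rw [add_mulVec, add_mulVec]
      simpa using this
    have htf : ∀ X : Matrix (Fin 2) (Fin n → Fin 2) ℤ, X + X = 0 → X = 0 := by
      intro X hX
      ext i d
      have := congrFun (congrFun hX i) d
      simp only [Matrix.add_apply, Matrix.zero_apply] at this ⊢
      omega
    rcases key htf _ _ _ _ h0 h1 hsum with ⟨e0, e1⟩ | ⟨e0, e1⟩
    · left
      ext i d
      have hd : d = Fin.cons (d 0) (Fin.tail d) := (Fin.cons_self_tail d).symm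
      rw [hd]
      have hk : d 0 = 0 ∨ d 0 = 1 := by omega
      rcases hk with hk | hk <;> rw [hk]
      · exact congrFun (congrFun e0 i) (Fin.tail d)
      · exact congrFun (congrFun e1 i) (Fin.tail d)
    · right
      ext i d
      have hd : d = Fin.cons (d 0) (Fin.tail d) := (Fin.cons_self_tail d).symm
      rw [hd]
      have hk : d 0 = 0 ∨ d 0 = 1 := by omega
      rcases hk with hk | hk <;> rw [hk]
      · simpa [res] using congrFun (congrFun e0 i) (Fin.tail d)
      · simpa [res] using congrFun (congrFun e1 i) (Fin.tail d)

theorem eq_of_forall_mulVec_xi_eq (n : ℕ) (hn : 1 ≤ n)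
    (A B : Matrix (Fin 2) (Fin n → Fin 2) ℤ)
    (h : ∀ y : Fin n → Fin 2 → ℤ,
      (∀ j, y j = ![1, 0] ∨ y j = ![0, 1] ∨ y j = ![1, 1]) →
      A.mulVec (xi n y) = B.mulVec (xi n y) ∨ A.mulVec (xi n y) = -(B.mulVec (xi n y))) :
    A = B ∨ A = -B :=
  aux n A B h
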